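/- The group presented on six generators a, b, c, d, e, f with the six relations a = 1, b = 1, b·e⁻¹ = 1, a·d⁻¹ = 1, c·d·b·f·c⁻¹·a⁻¹ = 1, b⁻¹·c⁻¹·f·a·e·c = 1 (the unknot template presentation) is isomorphic to the additive group of integers ℤ (equivalently, to the free group on one generator). -/

import Mathlib

/-- The six relations of the unknot template presentation on generators
`a, b, c, d, e, f` (encoded as `0, …, 5 : Fin 6`):
`a`, `b`, `b·e⁻¹`, `a·d⁻¹`, `c·d·b·f·c⁻¹·a⁻¹`, `b⁻¹·c⁻¹·f·a·e·c`. -/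
def unknotTemplateRels : Set (FreeGroup (Fin 6)) :=
  let a := FreeGroup.of (0 : Fin 6)
  let b := FreeGroup.of (1 : Fin 6)
  let c := FreeGroup.of (2 : Fin 6)
  let d := FreeGroup.of (3 : Fin 6)
  let e := FreeGroup.of (4 : Fin 6)
  let f := FreeGroup.of (5 : Fin 6)
  {a, b, b * e⁻¹, a * d⁻¹, c * d * b * f * c⁻¹ * a⁻¹, b⁻¹ * c⁻¹ * f * a * e * c}

namespace UnknotAux

abbrev G := PresentedGroup unknotTemplateRels

lemma rel_eq_one {r : FreeGroup (Fin 6)} (hr : r ∈ unknotTemplateRels) :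
    PresentedGroup.mk unknotTemplateRels r = 1 :=
  (QuotientGroup.eq_one_iff r).mpr (Subgroup.subset_normalClosure hr)

lemma of0 : (PresentedGroup.of 0 : G) = 1 :=
  rel_eq_one (by left; rfl)

lemma of1 : (PresentedGroup.of 1 : G) = 1 :=
  rel_eq_one (by right; left; rfl)

lemma of4 : (PresentedGroup.of 4 : G) = 1 := by
  have h := rel_eq_one (r := FreeGroup.of 1 * (FreeGroup.of 4)⁻¹)
    (by right; right; left; rfl)
  have : (PresentedGroup.of 1 : G) * (PresentedGroup.of 4)⁻¹ = 1 := by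
    exact h
  rw [of1, one_mul, inv_eq_one] at this
  exact this

lemma of3 : (PresentedGroup.of 3 : G) = 1 := by
  have h := rel_eq_one (r := FreeGroup.of 0 * (FreeGroup.of 3)⁻¹)
    (by right; right; right; left; rfl)
  have : (PresentedGroup.of 0 : G) * (PresentedGroup.of 3)⁻¹ = 1 := by
    exact h
  rw [of0, one_mul, inv_eq_one] at this
  exact this

lemma of5 : (PresentedGroup.of 5 : G) = 1 := by
  have h := rel_eq_one (r := FreeGroup.of 2 * FreeGroup.of 3 * FreeGroup.of 1 *
      FreeGroup.of 5 * (FreeGroup.of 2)⁻¹ * (FreeGroup.of 0)⁻¹)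
    (by right; right; right; right; left; rfl)
  have h2 : (PresentedGroup.of 2 : G) * PresentedGroup.of 3 * PresentedGroup.of 1 *
      PresentedGroup.of 5 * (PresentedGroup.of 2)⁻¹ * (PresentedGroup.of 0)⁻¹ = 1 := by
    exact h
  rw [of0, of1, of3, mul_one, mul_one, inv_one, mul_one] at h2
  have := mul_right_cancel (b := (PresentedGroup.of 2 : G)⁻¹)
    (by rw [h2])
  -- h2 : c * f * c⁻¹ = 1
  have h3 : (PresentedGroup.of 5 : G) = (PresentedGroup.of 2)⁻¹ * 1 * PresentedGroup.of 2 := by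
    rw [← h2]; group
  simpa using h3

def fgen : Fin 6 → Multiplicative ℤ := fun i => if i = 2 then Multiplicative.ofAdd 1 else 1

lemma hrels : ∀ r ∈ unknotTemplateRels, FreeGroup.lift fgen r = 1 := by
  intro r hr
  rcases hr with h | h | h | h | h | h <;> subst h <;>
    simp [fgen, Multiplicative.ofAdd] <;> decide

def φ : G →* Multiplicative ℤ := PresentedGroup.toGroup hrels

def ψ : Multiplicative ℤ →* G := zpowersHom G (PresentedGroup.of 2)

lemma comp1 : ψ.comp φ = MonoidHom.id G := by
  apply PresentedGroup.ext
  intro x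
  fin_cases x <;>
    simp [φ, ψ, fgen, of0, of1, of3, of4, of5, PresentedGroup.toGroup.of]

lemma comp2 : φ.comp ψ = MonoidHom.id (Multiplicative ℤ) := by
  apply MonoidHom.ext_mint
  simp [φ, ψ, fgen, PresentedGroup.toGroup.of]

end UnknotAux

/-- The unknot template presentation
`⟨a,b,c,d,e,f | a, b, b·e⁻¹, a·d⁻¹, c·d·b·f·c⁻¹·a⁻¹, b⁻¹·c⁻¹·f·a·e·c⟩`
is isomorphic to the (additive) group of integers `ℤ`, i.e. to the free group
on one generator. -/
theorem unknot_template_iso_int :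
    Nonempty (PresentedGroup unknotTemplateRels ≃* Multiplicative ℤ) := by
  exact ⟨MonoidHom.toMulEquiv UnknotAux.φ UnknotAux.ψ UnknotAux.comp1 UnknotAux.comp2⟩
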